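/- Let R₁, …, Rₙ be rings (or, more generally, monoids), let R = R₁ × ⋯ × Rₙ, and let u = (u₁,…,uₙ) and v = (v₁,…,vₙ) be units of R. Then (u, v) is a free pair if and only if (u_i, v_i) is a free pair for some i ∈ {1,…,n}. -/

import Mathlib

/-- `u` and `v` form a free pair. -/
def IsFreePair {G : Type*} [Group G] (u v : G) : Prop :=
  Function.Injective ((FreeGroup.lift (fun b : Bool => if b then u else v)) : FreeGroup Bool →* G)


/-- A free group in which all elements commute embeds into `Multiplicative ℤ`. -/
lemma aux_comm_free_embeds (H : Type*) [Group H] [IsFreeGroup H]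
    (hcomm : ∀ x y : H, x * y = y * x) :
    ∃ f : H →* Multiplicative ℤ, Function.Injective f := by
  classical
  have hsub : ∀ s t : IsFreeGroup.Generators H, s = t := by
    intro s t
    by_contra hst
    let σ : Equiv.Perm (Fin 3) := Equiv.swap 0 1
    let τ : Equiv.Perm (Fin 3) := Equiv.swap 1 2
    let f : H →* Equiv.Perm (Fin 3) :=
      IsFreeGroup.lift (fun x => if x = s then σ else if x = t then τ else 1)
    have h1 : f (IsFreeGroup.of s) = σ := by
      simp [f, IsFreeGroup.lift_of]
    have h2 : f (IsFreeGroup.of t) = τ := by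
      simp [f, IsFreeGroup.lift_of, Ne.symm hst]
    have hc : σ * τ = τ * σ := by
      rw [← h1, ← h2, ← map_mul, hcomm, map_mul]
    have : ¬ (σ * τ = τ * σ) := by decide
    exact this hc
  cases isEmpty_or_nonempty (IsFreeGroup.Generators H) with
  | inl hE =>
    refine ⟨1, fun x y _ => ?_⟩
    have hid : (MonoidHom.id H) = 1 := IsFreeGroup.ext_hom (fun s => isEmptyElim s)
    have hx : x = 1 := congrFun (congrArg (fun g : H →* H => (g : H → H)) hid) x
    have hy : y = 1 := congrFun (congrArg (fun g : H →* H => (g : H → H)) hid) y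
    rw [hx, hy]
  | inr hN =>
    obtain ⟨s₀⟩ := hN
    let φ : H →* Multiplicative ℤ :=
      IsFreeGroup.lift (fun _ => Multiplicative.ofAdd (1 : ℤ))
    refine ⟨φ, ?_⟩
    have key : (zpowersHom H (IsFreeGroup.of s₀)).comp φ = MonoidHom.id H := by
      apply IsFreeGroup.ext_hom
      intro s
      rw [hsub s s₀]
      simp [φ, IsFreeGroup.lift_of, zpowersHom_apply]
    intro x y hxy
    have hx := congrFun (congrArg (fun g : H →* H => (g : H → H)) key) x
    have hy := congrFun (congrArg (fun g : H →* H => (g : H → H)) key) y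
    simp only [MonoidHom.comp_apply, MonoidHom.id_apply] at hx hy
    rw [← hx, ← hy, hxy]

/-- In a free group, two nontrivial normal subgroups intersect nontrivially. -/
lemma aux_inf_normal (A B : Subgroup (FreeGroup Bool)) (hA : A.Normal) (hB : B.Normal)
    (h : A ⊓ B = ⊥) : A = ⊥ ∨ B = ⊥ := by
  by_contra hc
  push_neg at hc
  obtain ⟨hAne, hBne⟩ := hc
  rw [Ne, Subgroup.eq_bot_iff_forall] at hAne hBne
  push_neg at hAne hBne
  obtain ⟨a, haA, ha1⟩ := hAne
  obtain ⟨b, hbB, hb1⟩ := hBne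
  -- the commutator of a and b is in A ⊓ B = ⊥, so a and b commute
  have hab : a * b = b * a := by
    have h1 : a⁻¹ * (b⁻¹ * a * b⁻¹⁻¹) ∈ A := mul_mem (inv_mem haA) (hA.conj_mem a haA b⁻¹)
    have h2 : (a⁻¹ * b⁻¹ * a⁻¹⁻¹) * b ∈ B := mul_mem (hB.conj_mem b⁻¹ (inv_mem hbB) a⁻¹) hbB
    have hmem : a⁻¹ * b⁻¹ * a * b ∈ A ⊓ B := by
      constructor
      · have := h1; group at this ⊢; convert this using 2; exact Iff.rfl
      · have := h2; group at this ⊢; convert this using 2; exact Iff.rfl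
    rw [h, Subgroup.mem_bot] at hmem
    have hx : (b * a) * (a⁻¹ * b⁻¹ * a * b) = a * b := by group
    rw [hmem, mul_one] at hx
    exact hx.symm
  -- the subgroup generated by a and b is free and commutative
  set K : Subgroup (FreeGroup Bool) := Subgroup.closure {a, b} with hK
  have haK : a ∈ K := Subgroup.subset_closure (by simp)
  have hbK : b ∈ K := Subgroup.subset_closure (by simp)
  have hcent : ∀ x ∈ K, a * x = x * a ∧ b * x = x * b := by
    intro x hx
    have : K ≤ Subgroup.centralizer {a, b} := by
      apply Subgroup.closure_le _ |>.mpr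
      intro y hy
      rcases hy with rfl | hy
      · rw [SetLike.mem_coe, Subgroup.mem_centralizer_iff]
        rintro g (rfl | hg)
        · rfl
        · simp at hg; subst hg; exact hab.symm
      · simp at hy; subst hy
        rw [SetLike.mem_coe, Subgroup.mem_centralizer_iff]
        rintro g (rfl | hg)
        · exact hab
        · simp at hg; subst hg; rfl
    have hx' := this hx
    rw [Subgroup.mem_centralizer_iff] at hx'
    exact ⟨hx' a (by simp), hx' b (by simp)⟩
  have hcommK : ∀ x y : K, x * y = y * x := by
    rintro ⟨x, hx⟩ ⟨y, hy⟩
    have hxc : K ≤ Subgroup.centralizer {x} := by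
      apply Subgroup.closure_le _ |>.mpr
      intro z hz
      rw [SetLike.mem_coe, Subgroup.mem_centralizer_iff]
      intro g hg
      rw [Set.mem_singleton_iff] at hg
      rw [hg]
      rcases hz with rfl | hz
      · exact ((hcent x hx).1).symm
      · simp at hz; subst hz; exact ((hcent x hx).2).symm
    have := hxc hy
    rw [Subgroup.mem_centralizer_iff] at this
    exact Subtype.ext (by push_cast; exact this x rfl)
  obtain ⟨f, hf⟩ := aux_comm_free_embeds K hcommK
  set p : ℤ := Multiplicative.toAdd (f ⟨a, haK⟩) with hp
  set q : ℤ := Multiplicative.toAdd (f ⟨b, hbK⟩) with hq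
  have hp0 : p ≠ 0 := by
    intro h0
    have : f ⟨a, haK⟩ = f 1 := by
      rw [map_one]
      have : f ⟨a, haK⟩ = Multiplicative.ofAdd p := by simp [hp]
      rw [this, h0]; rfl
    exact ha1 (congrArg Subtype.val (hf this))
  have hq0 : q ≠ 0 := by
    intro h0
    have : f ⟨b, hbK⟩ = f 1 := by
      rw [map_one]
      have : f ⟨b, hbK⟩ = Multiplicative.ofAdd q := by simp [hq]
      rw [this, h0]; rfl
    exact hb1 (congrArg Subtype.val (hf this))
  have hkey : (⟨a, haK⟩ : K) ^ q = (⟨b, hbK⟩ : K) ^ p := by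
    apply hf
    rw [map_zpow, map_zpow]
    have ha' : f ⟨a, haK⟩ = Multiplicative.ofAdd p := by simp [hp]
    have hb' : f ⟨b, hbK⟩ = Multiplicative.ofAdd q := by simp [hq]
    rw [ha', hb', ← ofAdd_zsmul, ← ofAdd_zsmul, smul_eq_mul, smul_eq_mul, mul_comm]
  have haq : a ^ q ∈ A ⊓ B := by
    constructor
    · exact zpow_mem haA q
    · have h3 : a ^ q = b ^ p := by
        have := congrArg Subtype.val hkey
        push_cast at this
        exact this
      rw [h3]
      exact zpow_mem hbB p
  rw [h, Subgroup.mem_bot] at haq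
  have : (⟨a, haK⟩ : K) ^ q = 1 := by
    apply Subtype.ext
    push_cast
    exact haq
  have : f ((⟨a, haK⟩ : K) ^ q) = 1 := by rw [this, map_one]
  rw [map_zpow] at this
  have ha' : f ⟨a, haK⟩ = Multiplicative.ofAdd p := by simp [hp]
  rw [ha', ← ofAdd_zsmul, smul_eq_mul] at this
  have hqp : q * p = 0 := by
    have h5 : Multiplicative.ofAdd (q * p) = Multiplicative.ofAdd 0 := this
    exact Multiplicative.ofAdd.injective h5
  rcases mul_eq_zero.mp hqp with h' | h'
  · exact hq0 h'
  · exact hp0 h'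


lemma aux_iInf_normal {n : ℕ} (N : Fin n → Subgroup (FreeGroup Bool))
    (hN : ∀ i, (N i).Normal) (h : ⨅ i, N i = ⊥) : ∃ i, N i = ⊥ := by
  induction n with
  | zero =>
    exfalso
    rw [iInf_of_empty] at h
    have hmem : FreeGroup.of true ∈ (⊥ : Subgroup (FreeGroup Bool)) := h ▸ Subgroup.mem_top _
    rw [Subgroup.mem_bot] at hmem
    have h2 := congrArg (FreeGroup.lift (fun _ : Bool => Multiplicative.ofAdd (1 : ℤ))) hmem
    rw [FreeGroup.lift_apply_of] at h2
    simp only [map_one] at h2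
    have h3 : Multiplicative.ofAdd (1 : ℤ) = Multiplicative.ofAdd 0 := h2
    exact one_ne_zero (Multiplicative.ofAdd.injective h3)
  | succ m ih =>
    set K : Subgroup (FreeGroup Bool) := ⨅ i : Fin m, N i.succ with hKdef
    have hKn : K.Normal := by
      constructor
      intro x hx g
      rw [Subgroup.mem_iInf] at hx ⊢
      intro i
      exact (hN i.succ).conj_mem x (hx i) g
    have hinf : N 0 ⊓ K = ⊥ := by
      rw [eq_bot_iff, ← h]
      apply le_iInf
      intro i
      refine Fin.cases ?_ ?_ i
      · exact inf_le_left
      · intro j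
        exact le_trans inf_le_right (iInf_le _ j)
    rcases aux_inf_normal (N 0) K (hN 0) hKn hinf with h0 | hK0
    · exact ⟨0, h0⟩
    · obtain ⟨i, hi⟩ := ih (fun i => N i.succ) (fun i => hN i.succ) hK0
      exact ⟨i.succ, hi⟩

/-- **Lemma (Lemma 2.2).** Let `R = R₁ × ⋯ × Rₙ` be a finite product of monoids and
`u = (u₁, …, uₙ)`, `v = (v₁, …, vₙ)` units of `R`. Then `(u, v)` is a free pair if and
only if `(uᵢ, vᵢ)` is a free pair for some `i`. -/
theorem free_pair_pi_iff (n : ℕ) (M : Fin n → Type*) [∀ i, Monoid (M i)]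
    (u v : (∀ i, M i)ˣ) :
    IsFreePair u v ↔
      ∃ i : Fin n, IsFreePair (Units.map (Pi.evalMonoidHom M i) u)
        (Units.map (Pi.evalMonoidHom M i) v) := by
  set φ : FreeGroup Bool →* (∀ i, M i)ˣ := FreeGroup.lift (fun b : Bool => if b then u else v)
    with hφ
  have hcomp : ∀ i : Fin n,
      (FreeGroup.lift (fun b : Bool => if b then Units.map (Pi.evalMonoidHom M i) u
        else Units.map (Pi.evalMonoidHom M i) v) : FreeGroup Bool →* (M i)ˣ)
      = (Units.map (Pi.evalMonoidHom M i)).comp φ := by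
    intro i
    apply FreeGroup.ext_hom
    intro b
    rw [MonoidHom.comp_apply, hφ]
    cases b <;> simp
  constructor
  · intro h
    have hinf : (⨅ i : Fin n, ((Units.map (Pi.evalMonoidHom M i)).comp φ).ker) = ⊥ := by
      rw [eq_bot_iff]
      intro x hx
      rw [Subgroup.mem_iInf] at hx
      rw [Subgroup.mem_bot]
      apply h
      rw [map_one]
      ext i
      have := hx i
      rw [MonoidHom.mem_ker, MonoidHom.comp_apply] at this
      have := congrArg Units.val this
      simpa using this
    obtain ⟨i, hi⟩ := aux_iInf_normal _ (fun i => MonoidHom.normal_ker _) hinf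
    refine ⟨i, ?_⟩
    unfold IsFreePair
    rw [hcomp i]
    exact (MonoidHom.ker_eq_bot_iff _).mp hi
  · rintro ⟨i, hi⟩
    unfold IsFreePair at hi ⊢
    rw [hcomp i, MonoidHom.coe_comp] at hi
    exact hi.of_comp
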